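/- Main lower bound: if there exists a deterministic algorithm achieving simple regret r_(T) ≤ ε on every f in the RKHS ball S of radius R within T noiseless function evaluations, then T > log N(S(X), 4ε, ‖·‖_∞) / (4 log(R/ε)), provided 0 < ε < ε₀, where ε₀ = min{ sup{δ > 0 : log N(S(X), 4δ, ‖·‖_∞) > 2 log 2}, R/4 }. -/

import Mathlib

open scoped RealInnerProductSpace ENNReal

/-- Sup-norm covering number over `X` of a family `F` of real-valued functions. -/
noncomputable def covN {D : Type*} (X : Set D) (F : Set (D → ℝ)) (ε : ℝ) : ℝ≥0∞ :=
  ⨅ (C : Finset (D → ℝ)) (_ : ∀ f ∈ F, ∃ c ∈ C, ∀ x ∈ X, |f x - c x| ≤ ε),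
    (C.card : ℝ≥0∞)

/-- History produced by running a deterministic algorithm on the objective `F`. -/
def runHist {D : Type*} (alg : List (D × ℝ) → D) (F : D → ℝ) : ℕ → List (D × ℝ)
  | 0 => []
  | n + 1 => runHist alg F n ++ [(alg (runHist alg F n), F (alg (runHist alg F n)))]

/-- The point queried at step `n` (0-indexed) by the algorithm on objective `F`. -/
def queryPt {D : Type*} (alg : List (D × ℝ) → D) (F : D → ℝ) (n : ℕ) : D :=
  alg (runHist alg F n)

section Net

open MeasureTheory Metric

attribute [local instance] Classical.propDecidable

lemma sep_card_le (m : ℕ) (R δ : ℝ) (hR : 0 ≤ R) (hδ : 0 < δ)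
    (s : Finset (EuclideanSpace ℝ (Fin m)))
    (hs : ↑s ⊆ closedBall (0 : EuclideanSpace ℝ (Fin m)) R)
    (hsep : ∀ x ∈ s, ∀ y ∈ s, x ≠ y → 2 * δ < dist x y) :
    (s.card : ℝ) ≤ ((R + δ) / δ) ^ m := by
  set B := volume (ball (0 : EuclideanSpace ℝ (Fin m)) 1) with hB
  have hB0 : B ≠ 0 := (measure_ball_pos _ _ one_pos).ne'
  have hBt : B ≠ ⊤ := measure_ball_lt_top.ne
  have hdisj : (↑s : Set (EuclideanSpace ℝ (Fin m))).PairwiseDisjoint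
      (fun x => ball x δ) := by
    intro x hx y hy hxy
    exact ball_disjoint_ball (by linarith [hsep x hx y hy hxy])
  have hunion : (⋃ x ∈ s, ball x δ) ⊆ ball (0 : EuclideanSpace ℝ (Fin m)) (R + δ) := by
    intro z hz
    simp only [Set.mem_iUnion] at hz
    obtain ⟨x, hx, hzx⟩ := hz
    have hx' := hs hx
    simp only [mem_ball, mem_closedBall] at *
    calc dist z 0 ≤ dist z x + dist x 0 := dist_triangle _ _ _
      _ < δ + R := by linarith
      _ = R + δ := by ring
  have hmeas : volume (⋃ x ∈ s, ball x δ) = s.card * (ENNReal.ofReal (δ ^ m) * B) := by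
    rw [measure_biUnion_finset hdisj (fun x _ => measurableSet_ball)]
    have : ∀ x ∈ s, volume (ball x δ) = ENNReal.ofReal (δ ^ m) * B := by
      intro x _
      rw [Measure.addHaar_ball_of_pos volume x hδ, finrank_euclideanSpace_fin]
    rw [Finset.sum_congr rfl this, Finset.sum_const, nsmul_eq_mul]
  have hle : (s.card : ℝ≥0∞) * (ENNReal.ofReal (δ ^ m) * B)
      ≤ ENNReal.ofReal ((R + δ) ^ m) * B := by
    rw [← hmeas]
    have h2 : volume (ball (0 : EuclideanSpace ℝ (Fin m)) (R + δ))
        = ENNReal.ofReal ((R + δ) ^ m) * B := by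
      rw [Measure.addHaar_ball_of_pos volume _ (by linarith : (0:ℝ) < R + δ),
        finrank_euclideanSpace_fin]
    rw [← h2]
    exact measure_mono hunion
  have hle2 : (s.card : ℝ≥0∞) * ENNReal.ofReal (δ ^ m) ≤ ENNReal.ofReal ((R + δ) ^ m) := by
    rw [← mul_assoc] at hle
    exact (ENNReal.mul_le_mul_iff_left hB0 hBt).mp hle
  have hδm : 0 < δ ^ m := pow_pos hδ m
  have h3 := ENNReal.toReal_mono (by simp) hle2
  simp only [ENNReal.toReal_mul, ENNReal.toReal_ofReal hδm.le] at h3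
  rw [ENNReal.toReal_ofReal (by positivity : (0:ℝ) ≤ (R + δ) ^ m)] at h3
  simp only [ENNReal.toReal_natCast] at h3
  rw [div_pow, le_div_iff₀ (by positivity)]
  exact h3

lemma exists_net (m : ℕ) (R δ : ℝ) (hR : 0 ≤ R) (hδ : 0 < δ) :
    ∃ s : Finset (EuclideanSpace ℝ (Fin m)),
      (s.card : ℝ) ≤ ((R + δ) / δ) ^ m ∧
      ∀ x ∈ closedBall (0 : EuclideanSpace ℝ (Fin m)) R, ∃ y ∈ s, dist x y ≤ 2 * δ := by
  set P : Finset (EuclideanSpace ℝ (Fin m)) → Prop := fun s =>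
    ↑s ⊆ closedBall (0 : EuclideanSpace ℝ (Fin m)) R ∧
    ∀ x ∈ s, ∀ y ∈ s, x ≠ y → 2 * δ < dist x y with hP
  have hcard : ∀ s, P s → (s.card : ℝ) ≤ ((R + δ) / δ) ^ m := fun s hs =>
    sep_card_le m R δ hR hδ s hs.1 hs.2
  set A : Set ℕ := {n | ∃ s, P s ∧ s.card = n} with hA
  have hA0 : 0 ∈ A := ⟨∅, ⟨by simp [hP], by simp [hP]⟩, rfl⟩
  have hAbdd : BddAbove A := by
    refine ⟨Nat.ceil (((R + δ) / δ) ^ m), fun n hn => ?_⟩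
    obtain ⟨s, hs, rfl⟩ := hn
    have h1 : (s.card : ℝ) ≤ ((R + δ) / δ) ^ m := hcard s hs
    have h2 : (((R + δ) / δ) ^ m : ℝ) ≤ Nat.ceil (((R + δ) / δ) ^ m) := Nat.le_ceil _
    exact_mod_cast h1.trans h2
  obtain ⟨s, hsP, hscard⟩ := Nat.sSup_mem ⟨0, hA0⟩ hAbdd
  refine ⟨s, hcard s hsP, fun x hx => ?_⟩
  by_contra hcon
  push_neg at hcon
  have hxs : x ∉ s := fun hxs => by
    have := hcon x hxs
    linarith [dist_self x, this]
  have hP' : P (insert x s) := by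
    constructor
    · intro z hz
      rcases Finset.mem_coe.mp hz |> Finset.mem_insert.mp with rfl | hz'
      · exact hx
      · exact hsP.1 hz'
    · intro a ha b hb hab
      rcases Finset.mem_insert.mp ha with rfl | ha' <;>
        rcases Finset.mem_insert.mp hb with rfl | hb'
      · exact absurd rfl hab
      · exact hcon b hb'
      · rw [dist_comm]; exact hcon a ha'
      · exact hsP.2 a ha' b hb' hab
  have : s.card + 1 ∈ A := ⟨insert x s, hP', by rw [Finset.card_insert_of_notMem hxs]⟩
  have := le_csSup hAbdd this
  omega

end Net

set_option maxHeartbeats 2000000 in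
/-- Main lower bound: if a deterministic algorithm achieves simple regret `≤ ε` on every
`f` in the RKHS ball `S` of radius `R` within `T` noiseless evaluations, then
`T > log N(S(X), 4ε, ‖·‖_∞) / (4 log(R/ε))`, provided `0 < ε < ε₀` with
`ε₀ = min{ sup{δ > 0 : log N(S(X),4δ) > 2 log 2}, R/4 }`.  Here the RKHS `H` is modeled
as a real Hilbert space with kernel sections `K`, evaluation `f(x) = ⟪f, K x⟫`, kernel
`k(x₁,x₂) = ⟪K x₁, K x₂⟫` continuous and bounded by `1`, and `X` compact. -/
theorem main_lower_bound {H : Type*} [NormedAddCommGroup H]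
    [InnerProductSpace ℝ H] [CompleteSpace H] {d : ℕ}
    (K : (Fin d → ℝ) → H) (X : Set (Fin d → ℝ)) (hX : IsCompact X)
    (hkcont : Continuous fun p : (Fin d → ℝ) × (Fin d → ℝ) => ⟪K p.1, K p.2⟫)
    (hkbound : ∀ x₁ ∈ X, ∀ x₂ ∈ X, ⟪K x₁, K x₂⟫ ≤ (1 : ℝ))
    (R : ℝ) (hR : 0 < R) (ε : ℝ) (hε : 0 < ε)
    (hε₀ : ε < min
      (sSup {δ : ℝ | 0 < δ ∧
        2 * Real.log 2 < Real.log (covN X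
          ((fun f : H => fun p => ⟪f, K p⟫) '' {f : H | ‖f‖ ≤ R}) (4 * δ)).toReal})
      (R / 4))
    (T : ℕ)
    (alg : List ((Fin d → ℝ) × ℝ) → (Fin d → ℝ))
    (halgX : ∀ l, alg l ∈ X)
    (hregret : ∀ f : H, ‖f‖ ≤ R → ∃ τ < T, ∀ x ∈ X,
      ⟪f, K (queryPt alg (fun p => ⟪f, K p⟫) τ)⟫ ≤ ⟪f, K x⟫ + ε) :
    Real.log (covN X ((fun f : H => fun p => ⟪f, K p⟫) '' {f : H | ‖f‖ ≤ R})
        (4 * ε)).toReal / (4 * Real.log (R / ε)) < (T : ℝ) := by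
  classical
  have hεR : ε < R / 4 := lt_of_lt_of_le hε₀ (min_le_right _ _)
  set u : ℝ := R / ε with hu_def
  have hu4 : 4 < u := by
    rw [hu_def, lt_div_iff₀ hε]
    linarith
  have hu0 : 0 < u := by linarith
  -- T is positive
  have hT : 0 < T := by
    obtain ⟨τ, hτ, -⟩ := hregret 0 (by simp [hR.le])
    omega
  -- the query points on the zero objective
  set Z : (Fin d → ℝ) → ℝ := fun _ => 0 with hZ
  set xs : ℕ → (Fin d → ℝ) := fun n => queryPt alg Z n with hxs
  -- histories agree for functions vanishing on the query points
  have histLemma : ∀ g : H, (∀ t, t < T → ⟪g, K (xs t)⟫ = 0) →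
      ∀ n, n ≤ T → runHist alg (fun p => ⟪g, K p⟫) n = runHist alg Z n := by
    intro g hg n
    induction n with
    | zero => intro _; rfl
    | succ n ih =>
      intro hn
      have h1 := ih (by omega)
      simp only [runHist, h1]
      have h2 : ⟪g, K (alg (runHist alg Z n))⟫ = 0 := hg n (by omega)
      rw [h2]
  -- functions vanishing at all query points are uniformly small on X
  have lower : ∀ g : H, ‖g‖ ≤ R → (∀ t, t < T → ⟪g, K (xs t)⟫ = 0) →
      ∀ x ∈ X, -ε ≤ ⟪g, K x⟫ := by
    intro g hgR hg0 x hx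
    obtain ⟨τ, hτ, hreg⟩ := hregret g hgR
    have hq : queryPt alg (fun p => ⟪g, K p⟫) τ = xs τ := by
      show alg _ = alg _
      rw [histLemma g hg0 τ hτ.le]
    have := hreg x hx
    rw [hq, hg0 τ hτ] at this
    linarith
  have smallSup : ∀ g : H, ‖g‖ ≤ R → (∀ t, t < T → ⟪g, K (xs t)⟫ = 0) →
      ∀ x ∈ X, |⟪g, K x⟫| ≤ ε := by
    intro g hgR hg0 x hx
    have h1 := lower g hgR hg0 x hx
    have h2 := lower (-g) (by simpa using hgR)
      (fun t ht => by simp [inner_neg_left, hg0 t ht]) x hx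
    rw [inner_neg_left] at h2
    rw [abs_le]
    constructor <;> linarith
  -- the span of the kernel sections at the query points
  set s₀ : Finset H := (Finset.range T).image (fun t => K (xs t)) with hs₀
  set V : Submodule ℝ H := Submodule.span ℝ (s₀ : Set H) with hV
  haveI : FiniteDimensional ℝ V := FiniteDimensional.span_finset ℝ s₀
  set m : ℕ := Module.finrank ℝ V with hm_def
  have hmT : m ≤ T := by
    have h1 : (s₀ : Set H).finrank ℝ ≤ s₀.card := finrank_span_finset_le_card s₀
    have h2 : s₀.card ≤ T := le_trans (Finset.card_image_le) (by simp)
    exact le_trans h1 h2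
  have hKmem : ∀ t, t < T → K (xs t) ∈ V := by
    intro t ht
    exact Submodule.subset_span
      (Finset.mem_coe.mpr (Finset.mem_image_of_mem _ (Finset.mem_range.mpr ht)))
  set e : V ≃ₗᵢ[ℝ] EuclideanSpace ℝ (Fin m) := (stdOrthonormalBasis ℝ V).repr with he
  obtain ⟨net, hnetcard, hnet⟩ := exists_net m R ε hR.le hε
  -- the covering set
  set C : Finset ((Fin d → ℝ) → ℝ) :=
    net.image (fun y => fun x => ⟪((e.symm y : V) : H), K x⟫) with hC
  have hKx_norm : ∀ x ∈ X, ‖K x‖ ≤ 1 := by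
    intro x hx
    have := hkbound x hx x hx
    rw [real_inner_self_eq_norm_sq] at this
    nlinarith [norm_nonneg (K x)]
  -- C is a (4ε)-cover
  have hcover : ∀ f ∈ ((fun f : H => fun p => ⟪f, K p⟫) '' {f : H | ‖f‖ ≤ R}),
      ∃ c ∈ C, ∀ x ∈ X, |f x - c x| ≤ 4 * ε := by
    rintro f ⟨g, hgR, rfl⟩
    simp only [Set.mem_setOf_eq] at hgR
    set Pg : V := V.orthogonalProjectionOnto g with hPg
    have hperp : g - ↑Pg ∈ Vᗮ := Submodule.sub_starProjection_mem_orthogonal (K := V) g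
    have hip : ⟪(↑Pg : H), g - ↑Pg⟫ = 0 :=
      (Submodule.mem_orthogonal V (g - ↑Pg)).mp hperp _ Pg.2
    have hpyth : ‖g‖ ^ 2 = ‖(↑Pg : H)‖ ^ 2 + ‖g - ↑Pg‖ ^ 2 := by
      have hg : g = (↑Pg : H) + (g - ↑Pg) := by abel
      calc ‖g‖ ^ 2 = ‖(↑Pg : H) + (g - ↑Pg)‖ ^ 2 := by rw [← hg]
        _ = ‖(↑Pg : H)‖ ^ 2 + 2 * ⟪(↑Pg : H), g - ↑Pg⟫ + ‖g - ↑Pg‖ ^ 2 :=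
          norm_add_sq_real _ _
        _ = ‖(↑Pg : H)‖ ^ 2 + ‖g - ↑Pg‖ ^ 2 := by rw [hip]; ring
    have hPg_norm : ‖(↑Pg : H)‖ ≤ R := by
      nlinarith [norm_nonneg (g - (↑Pg : H)), norm_nonneg ((↑Pg : H)), norm_nonneg g]
    have hres_norm : ‖g - ↑Pg‖ ≤ R := by
      nlinarith [norm_nonneg (g - (↑Pg : H)), norm_nonneg ((↑Pg : H)), norm_nonneg g]
    have hres_small : ∀ x ∈ X, |⟪g - ↑Pg, K x⟫| ≤ ε := by
      refine smallSup _ hres_norm (fun t ht => ?_)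
      rw [real_inner_comm]
      exact (Submodule.mem_orthogonal V (g - ↑Pg)).mp hperp _ (hKmem t ht)
    -- find a net point close to the projection
    have hePg : e Pg ∈ Metric.closedBall (0 : EuclideanSpace ℝ (Fin m)) R := by
      rw [Metric.mem_closedBall, dist_zero_right, e.norm_map]
      exact hPg_norm
    obtain ⟨y, hy, hdy⟩ := hnet (e Pg) hePg
    refine ⟨_, Finset.mem_image_of_mem _ hy, fun x hx => ?_⟩
    set v : H := ((e.symm y : V) : H) with hv
    have hPv : ‖(↑Pg : H) - v‖ ≤ 2 * ε := by
      have h1 : ‖(↑Pg : H) - v‖ = ‖(Pg - e.symm y : V)‖ := rfl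
      rw [h1, ← dist_eq_norm]
      calc dist Pg (e.symm y) = dist (e.symm (e Pg)) (e.symm y) := by
            rw [e.symm_apply_apply]
        _ = dist (e Pg) y := e.symm.dist_map _ _
        _ ≤ 2 * ε := hdy
    have hsplit : ⟪g, K x⟫ - ⟪v, K x⟫ = ⟪g - ↑Pg, K x⟫ + ⟪(↑Pg : H) - v, K x⟫ := by
      rw [← inner_add_left]
      have h9 : g - ↑Pg + ((↑Pg : H) - v) = g - v := by abel
      rw [h9, inner_sub_left]
    calc |⟪g, K x⟫ - ⟪v, K x⟫|
        = |⟪g - ↑Pg, K x⟫ + ⟪(↑Pg : H) - v, K x⟫| := by rw [hsplit]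
      _ ≤ |⟪g - ↑Pg, K x⟫| + |⟪(↑Pg : H) - v, K x⟫| := abs_add_le _ _
      _ ≤ ε + ‖(↑Pg : H) - v‖ * ‖K x‖ :=
          add_le_add (hres_small x hx) (abs_real_inner_le_norm _ _)
      _ ≤ ε + (2 * ε) * 1 := by
          refine add_le_add_right (mul_le_mul hPv (hKx_norm x hx)
            (norm_nonneg _) (by linarith)) _
      _ ≤ 4 * ε := by linarith
  -- covering number bound
  set N : ℝ≥0∞ := covN X ((fun f : H => fun p => ⟪f, K p⟫) '' {f : H | ‖f‖ ≤ R}) (4 * ε)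
    with hN_def
  have hNle : N ≤ (C.card : ℝ≥0∞) := by
    rw [hN_def, covN]
    exact iInf₂_le C hcover
  have hNreal : N.toReal ≤ ((R + ε) / ε) ^ m := by
    have h1 := ENNReal.toReal_mono (by simp) hNle
    simp only [ENNReal.toReal_natCast] at h1
    refine h1.trans ?_
    calc (C.card : ℝ) ≤ (net.card : ℝ) := by exact_mod_cast Finset.card_image_le
      _ ≤ ((R + ε) / ε) ^ m := hnetcard
  -- numeric estimates
  have hbase : (R + ε) / ε = u + 1 := by
    rw [hu_def]
    field_simp
  have hchain : N.toReal ≤ (u + 1) ^ T := by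
    rw [hbase] at hNreal
    refine hNreal.trans (pow_le_pow_right₀ (by linarith) hmT)
  have hu41 : u + 1 < u ^ 4 := by
    have h1 : u + 1 < u ^ 2 := by nlinarith
    have h2 : u ^ 2 ≤ u ^ 4 := pow_le_pow_right₀ (by linarith) (by norm_num)
    linarith
  have hpow : (u + 1) ^ T < u ^ (4 * T) := by
    calc (u + 1) ^ T < (u ^ 4) ^ T :=
          pow_lt_pow_left₀ hu41 (by linarith) (by omega)
      _ = u ^ (4 * T) := by rw [← pow_mul]
  have hNlt : N.toReal < u ^ (4 * T) := lt_of_le_of_lt hchain hpow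
  have hlogu : 0 < Real.log u := Real.log_pos (by linarith)
  have hkey : Real.log N.toReal < (T : ℝ) * (4 * Real.log u) := by
    have hrhs : (0:ℝ) < (T : ℝ) * (4 * Real.log u) := by
      have : (0:ℝ) < (T : ℝ) := by exact_mod_cast hT
      positivity
    rcases le_or_gt N.toReal 1 with h1 | h1
    · exact lt_of_le_of_lt (Real.log_nonpos ENNReal.toReal_nonneg h1) hrhs
    · calc Real.log N.toReal < Real.log (u ^ (4 * T)) :=
            Real.log_lt_log (by linarith) hNlt
        _ = (4 * T : ℕ) * Real.log u := Real.log_pow _ _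
        _ = (T : ℝ) * (4 * Real.log u) := by push_cast; ring
  rw [div_lt_iff₀ (by positivity)]
  exact hkey
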